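/- Let G be a finite group, N a normal subgroup with G/N abelian, and χ an irreducible character of N that extends to an irreducible character χ̂ of G. Then every irreducible character of G lying over χ is of the form χ̂·β for a linear character β of G/N; in particular every irreducible character of G lying over χ has degree χ(1). -/

import Mathlib

open CategoryTheory Module Polynomial

noncomputable section GallagherAux

/-! ### Auxiliary results -/

private lemma gallagher_eig_pow_apply {V : Type} [AddCommGroup V] [Module ℂ V]
    (f : Module.End ℂ V) (μ : ℂ) (k : ℕ) (x : V) (hx : f x = μ • x) :
    (f ^ k) x = μ ^ k • x := by
  induction k with
  | zero => simp
  | succ k ih =>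
    rw [pow_succ, Module.End.mul_apply, hx, map_smul, ih, smul_smul, pow_succ]
    ring_nf

private lemma gallagher_conj_trace_pow {V : Type} [AddCommGroup V] [Module ℂ V]
    [FiniteDimensional ℂ V]
    (f : Module.End ℂ V) (n : ℕ) (hn : 0 < n) (hf : f ^ n = 1) :
    (starRingEnd ℂ) (LinearMap.trace ℂ V f) = LinearMap.trace ℂ V (f ^ (n - 1)) := by
  classical
  have hss : f.IsSemisimple := by
    apply Module.End.isSemisimple_of_squarefree_aeval_eq_zero
      (p := (X : ℂ[X]) ^ n - 1)
    · refine ((X_pow_sub_one_separable_iff).mpr ?_).squarefree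
      exact_mod_cast (Nat.cast_ne_zero (R := ℂ)).mpr hn.ne'
    · simp [hf]
  have htop : ⨆ μ : ℂ, f.eigenspace μ = ⊤ := by
    have h := Module.End.iSup_maxGenEigenspace_eq_top f
    simpa [hss.isFinitelySemisimple.maxGenEigenspace_eq_eigenspace] using h
  have hint : DirectSum.IsInternal (fun μ : ℂ => f.eigenspace μ) :=
    DirectSum.isInternal_submodule_of_iSupIndep_of_iSup_eq_top f.eigenspaces_iSupIndep htop
  have hfin : {μ : ℂ | f.eigenspace μ ≠ ⊥}.Finite := f.finite_hasEigenvalue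
  have hmapsf : ∀ μ : ℂ, Set.MapsTo f (f.eigenspace μ) (f.eigenspace μ) := by
    intro μ x hx
    rw [SetLike.mem_coe, Module.End.mem_eigenspace_iff] at hx ⊢
    rw [hx, map_smul, hx]
  have hmapsp : ∀ μ : ℂ, Set.MapsTo (f ^ (n - 1)) (f.eigenspace μ) (f.eigenspace μ) := by
    intro μ x hx
    rw [SetLike.mem_coe, Module.End.mem_eigenspace_iff] at hx ⊢
    rw [gallagher_eig_pow_apply f μ (n - 1) x hx, map_smul, hx, smul_smul, smul_smul, mul_comm]
  rw [LinearMap.trace_eq_sum_trace_restrict' hint hfin hmapsf,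
    LinearMap.trace_eq_sum_trace_restrict' hint hfin hmapsp, map_sum]
  refine Finset.sum_congr rfl fun μ hμ => ?_
  rw [Set.Finite.mem_toFinset] at hμ
  obtain ⟨x, hx, hx0⟩ := (Submodule.ne_bot_iff _).mp hμ
  rw [Module.End.mem_eigenspace_iff] at hx
  have hμn : μ ^ n = 1 := by
    have hx' : (f ^ n) x = μ ^ n • x := gallagher_eig_pow_apply f μ n x hx
    rw [hf, Module.End.one_apply] at hx'
    have h0 : (μ ^ n - 1) • x = 0 := by
      rw [sub_smul, one_smul, ← hx', sub_self]
    rcases smul_eq_zero.mp h0 with h | h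
    · have := sub_eq_zero.mp h; linear_combination this
    · exact absurd h hx0
  have habs : ‖μ‖ = 1 := by
    have h1 : ‖μ‖ ^ n = 1 := by rw [← norm_pow, hμn, norm_one]
    have h0 : 0 ≤ ‖μ‖ := norm_nonneg _
    have h2 := (pow_le_one_iff_of_nonneg h0 hn.ne').mp (le_of_eq h1)
    have h3 := (one_le_pow_iff_of_nonneg h0 hn.ne').mp (ge_of_eq h1)
    linarith
  have hmul : μ * μ ^ (n - 1) = 1 := by
    rw [← pow_succ', Nat.sub_add_cancel hn, hμn]
  have hconj : (starRingEnd ℂ) μ = μ ^ (n - 1) := by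
    have hcm : (starRingEnd ℂ) μ * μ = 1 := by
      rw [mul_comm, Complex.mul_conj, Complex.normSq_eq_norm_sq, habs]
      norm_num
    calc (starRingEnd ℂ) μ = (starRingEnd ℂ) μ * (μ * μ ^ (n - 1)) := by rw [hmul, mul_one]
    _ = ((starRingEnd ℂ) μ * μ) * μ ^ (n - 1) := by ring
    _ = μ ^ (n - 1) := by rw [hcm, one_mul]
  have hre : f.restrict (hmapsf μ) = μ • (1 : Module.End ℂ (f.eigenspace μ)) := by
    refine LinearMap.ext fun y => Subtype.ext ?_
    have hy := y.2
    rw [Module.End.mem_eigenspace_iff] at hy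
    simp [LinearMap.restrict_coe_apply, hy]
    exact hy
  have hre' : (f ^ (n - 1)).restrict (hmapsp μ)
      = μ ^ (n - 1) • (1 : Module.End ℂ (f.eigenspace μ)) := by
    refine LinearMap.ext fun y => Subtype.ext ?_
    have hy := y.2
    rw [Module.End.mem_eigenspace_iff] at hy
    simp [LinearMap.restrict_coe_apply, gallagher_eig_pow_apply f μ (n - 1) _ hy]
    exact gallagher_eig_pow_apply f μ (n - 1) _ hy
  rw [hre, hre', LinearMap.map_smul, LinearMap.map_smul, smul_eq_mul, smul_eq_mul,
    map_mul, hconj, LinearMap.trace_one]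
  simp

/-- For a finite group, the complex conjugate of a character value at `g` is the character
value at `g⁻¹`. -/
private lemma gallagher_char_conj_inv {H : Type} [Group H] [Fintype H]
    (V : FDRep ℂ H) (g : H) :
    (starRingEnd ℂ) (V.character g) = V.character g⁻¹ := by
  have hn : 0 < orderOf g := orderOf_pos g
  have h1 : (V.ρ g) ^ orderOf g = 1 := by
    rw [← map_pow, pow_orderOf_eq_one, map_one]
  have h2 : g⁻¹ = g ^ (orderOf g - 1) := by
    rw [eq_comm, eq_inv_iff_mul_eq_one, ← pow_succ, Nat.sub_add_cancel hn, pow_orderOf_eq_one]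
  rw [FDRep.character, gallagher_conj_trace_pow _ (orderOf g) hn h1, FDRep.character, h2,
    map_pow (V.ρ) g (orderOf g - 1)]

variable {G : Type} [Group G]

/-- Twisting a representation by a `ℂˣ`-valued character. -/
private def gTwistRep (X : FDRep ℂ G) (β : G →* ℂˣ) : Representation ℂ G X :=
{ toFun := fun g => (β g : ℂ) • X.ρ g
  map_one' := by simp
  map_mul' := fun g h => by
    simp only [map_mul, Units.val_mul]
    rw [smul_mul_smul_comm] }

private def gTwistObj (X : FDRep ℂ G) (β : G →* ℂˣ) : FDRep ℂ G := FDRep.of (gTwistRep X β)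

private lemma gTwistObj_ρ (X : FDRep ℂ G) (β : G →* ℂˣ) (g : G) :
    (gTwistObj X β).ρ g = (β g : ℂ) • X.ρ g := rfl

private lemma gTwistObj_char (X : FDRep ℂ G) (β : G →* ℂˣ) (g : G) :
    (gTwistObj X β).character g = (β g : ℂ) * X.character g := by
  rw [FDRep.character, FDRep.character, gTwistObj_ρ]
  exact (LinearMap.trace ℂ X).map_smul _ _

private def gTwistMap (β : G →* ℂˣ) {X Y : FDRep ℂ G} (f : X ⟶ Y) :
    gTwistObj X β ⟶ gTwistObj Y β where
  hom := f.hom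
  comm := fun g => by
    ext v
    have hc : f.hom (X.ρ g v) = Y.ρ g (f.hom v) := by
      exact ConcreteCategory.congr_hom (f.comm g) v
    change f.hom ((β g : ℂ) • X.ρ g v) = (β g : ℂ) • Y.ρ g (f.hom v)
    rw [map_smul, hc]

private def gTwistFunctor (β : G →* ℂˣ) : FDRep ℂ G ⥤ FDRep ℂ G where
  obj X := gTwistObj X β
  map f := gTwistMap β f
  map_id X := by
    apply Action.hom_ext
    rfl
  map_comp f g := by
    apply Action.hom_ext
    rfl

private def gTwistTwistIso (β γ : G →* ℂˣ) (h : ∀ g : G, (γ g : ℂ) * (β g : ℂ) = 1)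
    (X : FDRep ℂ G) : gTwistObj (gTwistObj X β) γ ≅ X :=
  Action.mkIso (Iso.refl _) (fun g => by
    ext v
    show ((γ g : ℂ) • ((β g : ℂ) • X.ρ g)) v = X.ρ g v
    simp [smul_smul, h g])

private def gTwistEquiv (β : G →* ℂˣ) : FDRep ℂ G ≌ FDRep ℂ G where
  functor := gTwistFunctor β
  inverse := gTwistFunctor β⁻¹
  unitIso := NatIso.ofComponents
    (fun X => (gTwistTwistIso β β⁻¹ (fun g => by simp) X).symm) (fun f => by
      apply Action.hom_ext
      rfl)
  counitIso := NatIso.ofComponents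
    (fun X => gTwistTwistIso β⁻¹ β (fun g => by simp) X) (fun f => by
      apply Action.hom_ext
      rfl)
  functor_unitIso_comp := fun X => by
    apply Action.hom_ext
    rfl

private lemma gTwistMap_zero (β : G →* ℂˣ) {X Y : FDRep ℂ G} :
    gTwistMap β (0 : X ⟶ Y) = 0 := by
  apply Action.hom_ext
  simp [gTwistMap]
  rfl

private lemma gallagher_simple_twistObj (β : G →* ℂˣ) (X : FDRep ℂ G) [Simple X] :
    Simple (gTwistObj X β) := by
  haveI : (gTwistFunctor β⁻¹).IsEquivalence := (gTwistEquiv β⁻¹).isEquivalence_functor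
  constructor
  intro Y f hmono
  have e : (gTwistFunctor β⁻¹).obj (gTwistObj X β) ≅ X := gTwistTwistIso β β⁻¹ (by simp) X
  let g : (gTwistFunctor β⁻¹).obj Y ⟶ X := (gTwistFunctor β⁻¹).map f ≫ e.hom
  haveI : Mono ((gTwistFunctor β⁻¹).map f) := (gTwistFunctor β⁻¹).map_mono f
  haveI : Mono g := mono_comp _ _
  have hiff := Simple.mono_isIso_iff_nonzero g
  have hmapf : (gTwistFunctor β⁻¹).map f = g ≫ e.inv := by simp [g]
  constructor
  · intro hf h0
    have hg : g ≠ 0 := hiff.mp inferInstance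
    apply hg
    show (gTwistFunctor β⁻¹).map f ≫ e.hom = 0
    have : (gTwistFunctor β⁻¹).map f = 0 := by
      show gTwistMap β⁻¹ f = 0
      rw [h0, gTwistMap_zero]
    rw [this, Limits.zero_comp]
  · intro hne
    have hg : g ≠ 0 := by
      intro h0
      apply hne
      have hm0 : (gTwistFunctor β⁻¹).map f = 0 := by
        rw [hmapf, h0, Limits.zero_comp]
      apply Action.hom_ext
      have : (gTwistMap β⁻¹ f).hom = (0 : (gTwistFunctor β⁻¹).obj Y ⟶
          (gTwistFunctor β⁻¹).obj (gTwistObj X β)).hom := congrArg Action.Hom.hom hm0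
      exact this
    have : IsIso g := hiff.mpr hg
    have : IsIso ((gTwistFunctor β⁻¹).map f) := by
      rw [hmapf]; infer_instance
    exact isIso_of_reflects_iso f (gTwistFunctor β⁻¹)

private lemma gallagher_finite_homs {A : Type} [CommGroup A] [Finite A] : Finite (A →* ℂˣ) := by
  haveI : NeZero ((Monoid.exponent A : ℂ)) := by
    refine ⟨?_⟩
    exact_mod_cast (Nat.cast_ne_zero (R := ℂ)).mpr (Monoid.exponent_ne_zero_of_finite)
  obtain ⟨e⟩ := CommGroup.monoidHom_mulEquiv_of_hasEnoughRootsOfUnity A ℂ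
  exact Finite.of_equiv A e.toEquiv.symm

private lemma gallagher_sum_hom_eq {A : Type} [CommGroup A] [Finite A] [Fintype (A →* ℂˣ)]
    (a : A) (ha : a ≠ 1) :
    ∑ φ : A →* ℂˣ, ((φ a : ℂ)) = 0 := by
  haveI : NeZero ((Monoid.exponent A : ℂ)) := by
    refine ⟨?_⟩
    exact_mod_cast (Nat.cast_ne_zero (R := ℂ)).mpr (Monoid.exponent_ne_zero_of_finite)
  obtain ⟨φ₀, hφ₀⟩ := CommGroup.exists_apply_ne_one_of_hasEnoughRootsOfUnity A ℂ ha
  have key : (φ₀ a : ℂ) * ∑ φ : A →* ℂˣ, ((φ a : ℂ)) = ∑ φ : A →* ℂˣ, ((φ a : ℂ)) := by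
    rw [Finset.mul_sum]
    exact Fintype.sum_bijective (fun φ => φ₀ * φ) (Group.mulLeft_bijective φ₀) _ _
      (fun φ => by simp [Units.val_mul])
  have h1 : ((φ₀ a : ℂ) - 1) * ∑ φ : A →* ℂˣ, ((φ a : ℂ)) = 0 := by
    rw [sub_mul, one_mul, key, sub_self]
  rcases mul_eq_zero.mp h1 with h | h
  · exfalso
    apply hφ₀
    have : (φ₀ a : ℂ) = 1 := by linear_combination h
    exact Units.ext this
  · exact h

private lemma gallagher_nonempty_iso_of_sum_ne_zero {H : Type} [Group H] [Fintype H]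
    (V W : FDRep ℂ H) [Simple V] [Simple W]
    (h : ∑ g : H, V.character g * W.character g⁻¹ ≠ 0) : Nonempty (V ≅ W) := by
  classical
  have hne : ((Nat.card H : ℂ)) ≠ 0 := by exact_mod_cast (Nat.card_pos (α := H)).ne'
  haveI : Invertible ((Nat.card H : ℂ)) := invertibleOfNonzero hne
  by_contra hc
  have h0 := FDRep.char_orthonormal (k := ℂ) (G := H) V W
  rw [if_neg hc] at h0
  apply h
  have h2 := congrArg (fun z => ((Nat.card H : ℂ)) * z) h0
  simp only [smul_eq_mul, ← mul_assoc, mul_inv_cancel₀ hne, one_mul, mul_zero, Nat.cast_ofNat] at h2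
  exact h2

end GallagherAux

/-- Gallagher's theorem for abelian quotient: if `N ⊴ G` with `G/N` abelian and the
irreducible character `χ` of `N` extends to an irreducible character `χ̂` of `G`, then
every irreducible character `ψ` of `G` lying over `χ` has the form `χ̂·β` for a linear
character `β` of `G/N`; in particular `ψ(1) = χ(1)`. -/
theorem gallagher_abelian_quotient
    (G : Type) [Group G] [Fintype G] (N : Subgroup G) [N.Normal]
    (habelian : ∀ a b : G ⧸ N, a * b = b * a)
    (χ : N → ℂ)
    (hirr : ∃ V : FDRep ℂ N, CategoryTheory.Simple V ∧ V.character = χ)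
    (χhat : G → ℂ)
    (hexthat : (∃ W : FDRep ℂ G, CategoryTheory.Simple W ∧ W.character = χhat) ∧
      ∀ x : N, χhat (x : G) = χ x)
    (ψ : G → ℂ)
    (hψirr : ∃ W : FDRep ℂ G, CategoryTheory.Simple W ∧ W.character = ψ)
    (hover : (∑ᶠ n : N, ψ (n : G) * (starRingEnd ℂ) (χ n)) ≠ 0) :
    (∃ β : (G ⧸ N) →* ℂ, ∀ g : G, ψ g = χhat g * β (QuotientGroup.mk g)) ∧
      ψ 1 = χ 1 := by
  classical
  obtain ⟨⟨W, hWs, hWc⟩, hres⟩ := hexthat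
  obtain ⟨Wψ, hψs, hψc⟩ := hψirr
  haveI := hWs
  haveI := hψs
  letI : CommGroup (G ⧸ N) := { (inferInstance : Group (G ⧸ N)) with mul_comm := habelian }
  haveI : Finite (G ⧸ N) := Quotient.finite _
  haveI : Finite ((G ⧸ N) →* ℂˣ) := gallagher_finite_homs
  letI : Fintype ((G ⧸ N) →* ℂˣ) := Fintype.ofFinite _
  letI : Fintype N := Fintype.ofFinite _
  -- restate `hover` as a finite sum
  rw [finsum_eq_sum_of_fintype] at hover
  -- rewrite the conjugate using the extension `χhat`
  have hconv : ∀ n : N, (starRingEnd ℂ) (χ n) = χhat ((n : G)⁻¹) := by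
    intro n
    rw [← hres n, ← hWc, gallagher_char_conj_inv W (n : G), hWc]
  have hT : (∑ n : N, ψ (n : G) * χhat ((n : G)⁻¹)) ≠ 0 := by
    intro h0
    apply hover
    rw [← h0]
    exact Finset.sum_congr rfl fun n _ => by rw [hconv n]
  -- sum over all linear characters of `G ⧸ N`
  set c : ℂ := (Fintype.card ((G ⧸ N) →* ℂˣ) : ℂ) with hc
  have step1 : ∀ g : G, (∑ φ : (G ⧸ N) →* ℂˣ,
      ψ g * (((φ (QuotientGroup.mk g⁻¹) : ℂ)) * χhat g⁻¹))
      = (if g ∈ N then c * (ψ g * χhat g⁻¹) else 0) := by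
    intro g
    by_cases hg : g ∈ N
    · have h1 : (QuotientGroup.mk g⁻¹ : G ⧸ N) = 1 := by
        rw [QuotientGroup.eq_one_iff]
        exact inv_mem hg
      rw [if_pos hg]
      simp only [h1, map_one, Units.val_one, one_mul]
      rw [Finset.sum_const, Finset.card_univ, nsmul_eq_mul, hc]
    · have h1 : (QuotientGroup.mk g⁻¹ : G ⧸ N) ≠ 1 := by
        rw [Ne, QuotientGroup.eq_one_iff]
        intro h
        exact hg (by simpa using inv_mem h)
      rw [if_neg hg]
      have : (∑ φ : (G ⧸ N) →* ℂˣ,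
          ψ g * (((φ (QuotientGroup.mk g⁻¹) : ℂ)) * χhat g⁻¹))
          = (ψ g * χhat g⁻¹) * ∑ φ : (G ⧸ N) →* ℂˣ, ((φ (QuotientGroup.mk g⁻¹) : ℂ)) := by
        rw [Finset.mul_sum]
        exact Finset.sum_congr rfl fun φ _ => by ring
      rw [this, gallagher_sum_hom_eq _ h1, mul_zero]
  have key : (∑ φ : (G ⧸ N) →* ℂˣ, ∑ g : G,
      ψ g * (((φ (QuotientGroup.mk g⁻¹) : ℂ)) * χhat g⁻¹))
      = c * ∑ n : N, ψ (n : G) * χhat ((n : G)⁻¹) := by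
    rw [Finset.sum_comm]
    calc (∑ g : G, ∑ φ : (G ⧸ N) →* ℂˣ,
        ψ g * (((φ (QuotientGroup.mk g⁻¹) : ℂ)) * χhat g⁻¹))
        = ∑ g : G, (if g ∈ N then c * (ψ g * χhat g⁻¹) else 0) :=
          Finset.sum_congr rfl fun g _ => step1 g
      _ = ∑ g ∈ Finset.univ.filter (· ∈ N), c * (ψ g * χhat g⁻¹) :=
          (Finset.sum_filter _ _).symm
      _ = ∑ n : N, c * (ψ (n : G) * χhat ((n : G)⁻¹)) := by
          refine Finset.sum_subtype _ (fun x => ?_) _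
          simp
      _ = c * ∑ n : N, ψ (n : G) * χhat ((n : G)⁻¹) := by rw [← Finset.mul_sum]
  have hkey0 : (∑ φ : (G ⧸ N) →* ℂˣ, ∑ g : G,
      ψ g * (((φ (QuotientGroup.mk g⁻¹) : ℂ)) * χhat g⁻¹)) ≠ 0 := by
    rw [key]
    refine mul_ne_zero ?_ hT
    rw [hc]
    exact_mod_cast Fintype.card_ne_zero
  obtain ⟨φ, -, hφ⟩ := Finset.exists_ne_zero_of_sum_ne_zero hkey0
  -- build the twisted representation and compare with `Wψ`
  set βG : G →* ℂˣ := φ.comp (QuotientGroup.mk' N) with hβG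
  set W' : FDRep ℂ G := gTwistObj W βG with hW'
  haveI : CategoryTheory.Simple W' := gallagher_simple_twistObj βG W
  have hW'char : ∀ g : G, W'.character g = (φ (QuotientGroup.mk g) : ℂ) * χhat g := by
    intro g
    rw [hW', gTwistObj_char, hWc]
    rfl
  have hsum : (∑ g : G, Wψ.character g * W'.character g⁻¹) ≠ 0 := by
    intro h0
    apply hφ
    rw [← h0]
    refine Finset.sum_congr rfl fun g _ => ?_
    rw [hψc, hW'char g⁻¹]
  obtain ⟨i⟩ := gallagher_nonempty_iso_of_sum_ne_zero Wψ W' hsum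
  have hchar := FDRep.char_iso i
  have hformula : ∀ g : G, ψ g = χhat g * ((φ (QuotientGroup.mk g) : ℂ)) := by
    intro g
    rw [← hψc, hchar, hW'char g]
    ring
  constructor
  · exact ⟨(Units.coeHom ℂ).comp φ, fun g => hformula g⟩
  · have h1 := hformula 1
    rw [QuotientGroup.mk_one, map_one, Units.val_one, mul_one] at h1
    rw [h1, ← hres 1]
    norm_num
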